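/- Let X be an n×n symmetric positive definite real matrix and K̂ = diag(k₁,...,kₙ) with ε λ_max(X⁻¹) ≤ kᵢ ≤ (2-ε) λ_min(X⁻¹) for all i, where ε ∈ (0,1). Then -(1-ε) I ⪯ I - X^{1/2} K̂ X^{1/2} ⪯ (1-ε) I. -/

import Mathlib

open Matrix

set_option linter.unusedSectionVars false

open scoped ComplexOrder in
/-- The positive semidefinite square root of a positive semidefinite matrix
(the definition `Matrix.PosSemidef.sqrt` of the older Mathlib, since removed). -/
noncomputable def Matrix.PosSemidef.sqrt {n 𝕜 : Type*} [Fintype n] [DecidableEq n] [RCLike 𝕜]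
    {A : Matrix n n 𝕜} (hA : A.PosSemidef) : Matrix n n 𝕜 :=
  hA.1.eigenvectorUnitary.1 * diagonal ((↑) ∘ (√·) ∘ hA.1.eigenvalues) *
  (star hA.1.eigenvectorUnitary : Matrix n n 𝕜)

section Aux

variable {m : Type*} [Fintype m] [DecidableEq m]

lemma psd_smul {A : Matrix m m ℝ} (hA : A.PosSemidef) {c : ℝ} (hc : 0 ≤ c) :
    (c • A).PosSemidef := by
  refine ⟨?_, fun x => ?_⟩
  · show (c • A)ᴴ = c • A
    rw [conjTranspose_smul, hA.1.eq]; simp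
  · exact (hA.smul hc).2 x

lemma diag_const_sub (c : ℝ) (f : m → ℝ) :
    diagonal (fun i => c - f i) = c • (1 : Matrix m m ℝ) - diagonal f := by
  ext i j
  by_cases h : i = j <;> simp [h, Matrix.diagonal_apply, Matrix.one_apply]

lemma diag_sub_const (c : ℝ) (f : m → ℝ) :
    diagonal (fun i => f i - c) = diagonal f - c • (1 : Matrix m m ℝ) := by
  ext i j
  by_cases h : i = j <;> simp [h, Matrix.diagonal_apply, Matrix.one_apply]

lemma smul_one_sub_psd {B : Matrix m m ℝ} (hB : B.IsHermitian) {c : ℝ}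
    (h : ∀ i, hB.eigenvalues i ≤ c) : (c • (1 : Matrix m m ℝ) - B).PosSemidef := by
  have hU : (hB.eigenvectorUnitary : Matrix m m ℝ) *
      (star (hB.eigenvectorUnitary : Matrix m m ℝ)) = 1 :=
    Matrix.mem_unitaryGroup_iff.mp hB.eigenvectorUnitary.2
  have hcoe : (RCLike.ofReal ∘ hB.eigenvalues : m → ℝ) = hB.eigenvalues := by
    ext i; simp [RCLike.ofReal]
  have key : c • (1 : Matrix m m ℝ) - B =
      (hB.eigenvectorUnitary : Matrix m m ℝ) * diagonal (fun i => c - hB.eigenvalues i) *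
        ((hB.eigenvectorUnitary : Matrix m m ℝ))ᴴ := by
    rw [← Matrix.star_eq_conjTranspose, diag_const_sub]
    conv_lhs => rw [hB.spectral_theorem, hcoe, ← hU]
    rw [Unitary.conjStarAlgAut_apply, mul_sub, sub_mul, Matrix.mul_smul, Matrix.smul_mul, mul_one]
  rw [key]
  exact (Matrix.PosSemidef.diagonal (fun i => sub_nonneg.mpr (h i))).mul_mul_conjTranspose_same _

lemma sub_smul_one_psd {B : Matrix m m ℝ} (hB : B.IsHermitian) {c : ℝ}
    (h : ∀ i, c ≤ hB.eigenvalues i) : (B - c • (1 : Matrix m m ℝ)).PosSemidef := by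
  have hU : (hB.eigenvectorUnitary : Matrix m m ℝ) *
      (star (hB.eigenvectorUnitary : Matrix m m ℝ)) = 1 :=
    Matrix.mem_unitaryGroup_iff.mp hB.eigenvectorUnitary.2
  have hcoe : (RCLike.ofReal ∘ hB.eigenvalues : m → ℝ) = hB.eigenvalues := by
    ext i; simp [RCLike.ofReal]
  have key : B - c • (1 : Matrix m m ℝ) =
      (hB.eigenvectorUnitary : Matrix m m ℝ) * diagonal (fun i => hB.eigenvalues i - c) *
        ((hB.eigenvectorUnitary : Matrix m m ℝ))ᴴ := by
    rw [← Matrix.star_eq_conjTranspose, diag_sub_const]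
    conv_lhs => rw [hB.spectral_theorem, hcoe, ← hU]
    rw [Unitary.conjStarAlgAut_apply, mul_sub, sub_mul, Matrix.mul_smul, Matrix.smul_mul, mul_one]
  rw [key]
  exact (Matrix.PosSemidef.diagonal (fun i => sub_nonneg.mpr (h i))).mul_mul_conjTranspose_same _

end Aux

/-- Decentralized condition (a) of Corollary 1: if each diagonal gain satisfies
`ε λ_max(X⁻¹) ≤ kᵢ ≤ (2-ε) λ_min(X⁻¹)`, then
`-(1-ε) I ⪯ I - X^{1/2} K̂ X^{1/2} ⪯ (1-ε) I` (Loewner order). -/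
theorem stmt_9 {n : ℕ} [NeZero n] (X : Matrix (Fin n) (Fin n) ℝ) (k : Fin n → ℝ)
    (ε : ℝ) (hε : 0 < ε ∧ ε < 1) (hX : X.PosDef) (hXinv : (X⁻¹).IsHermitian)
    (hk : ∀ i, ε * (⨆ j, hXinv.eigenvalues j) ≤ k i ∧
      k i ≤ (2 - ε) * (⨅ j, hXinv.eigenvalues j)) :
    ((1 - ε) • (1 : Matrix (Fin n) (Fin n) ℝ)
        - (1 - (PosSemidef.sqrt hX.posSemidef) * diagonal k * (PosSemidef.sqrt hX.posSemidef))).PosSemidef ∧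
    ((1 - (PosSemidef.sqrt hX.posSemidef) * diagonal k * (PosSemidef.sqrt hX.posSemidef))
        - (-(1 - ε)) • (1 : Matrix (Fin n) (Fin n) ℝ)).PosSemidef := by
  obtain ⟨hε0, hε1⟩ := hε
  set S := PosSemidef.sqrt hX.posSemidef with hSdef
  have hS : S.PosSemidef := by
    rw [hSdef, Matrix.PosSemidef.sqrt]
    exact (Matrix.PosSemidef.diagonal (fun i => by simp [Real.sqrt_nonneg])).mul_mul_conjTranspose_same _
  have hSS : S * S = X := by
    have hU := Unitary.coe_star_mul_self hX.posSemidef.1.eigenvectorUnitary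
    rw [hSdef, Matrix.PosSemidef.sqrt]
    conv_rhs => rw [hX.posSemidef.1.spectral_theorem, Unitary.conjStarAlgAut_apply]
    simp only [mul_assoc]
    rw [← mul_assoc (star (hX.posSemidef.1.eigenvectorUnitary : Matrix (Fin n) (Fin n) ℝ)), hU,
      one_mul, ← mul_assoc (diagonal _), diagonal_mul_diagonal]
    congr 3
    ext i
    simp [Real.mul_self_sqrt (hX.posSemidef.eigenvalues_nonneg i)]
  have hdet : IsUnit S.det := by
    have hmul : S.det * S.det = X.det := by rw [← det_mul, hSS]
    have hXd := hX.det_pos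
    refine isUnit_iff_ne_zero.mpr fun h0 => ?_
    rw [h0, mul_zero] at hmul
    linarith
  have hSinv : S * X⁻¹ * S = 1 := by
    rw [← hSS, Matrix.mul_inv_rev, ← mul_assoc,
      Matrix.mul_nonsing_inv S hdet, one_mul, Matrix.nonsing_inv_mul S hdet]
  set M := ⨆ j, hXinv.eigenvalues j with hM
  set mm := ⨅ j, hXinv.eigenvalues j with hmm
  have hMb : ∀ i, hXinv.eigenvalues i ≤ M := fun i =>
    le_ciSup (Set.finite_range _).bddAbove i
  have hmb : ∀ i, mm ≤ hXinv.eigenvalues i := fun i =>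
    ciInf_le (Set.finite_range _).bddBelow i
  have PSD1 : (diagonal k - ε • X⁻¹).PosSemidef := by
    have e1 : diagonal k - ε • X⁻¹ =
        diagonal (fun i => k i - ε * M) + ε • (M • (1 : Matrix (Fin n) (Fin n) ℝ) - X⁻¹) := by
      rw [diag_sub_const, smul_sub, smul_smul]
      abel
    rw [e1]
    exact (Matrix.PosSemidef.diagonal fun i => sub_nonneg.mpr (hk i).1).add
      (psd_smul (smul_one_sub_psd hXinv hMb) hε0.le)
  have PSD2 : ((2 - ε) • X⁻¹ - diagonal k).PosSemidef := by
    have e2 : (2 - ε) • X⁻¹ - diagonal k =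
        diagonal (fun i => (2 - ε) * mm - k i)
          + (2 - ε) • (X⁻¹ - mm • (1 : Matrix (Fin n) (Fin n) ℝ)) := by
      rw [diag_const_sub, smul_sub, smul_smul]
      abel
    rw [e2]
    exact (Matrix.PosSemidef.diagonal fun i => sub_nonneg.mpr (hk i).2).add
      (psd_smul (sub_smul_one_psd hXinv hmb) (by linarith))
  have conj1 : S * (diagonal k - ε • X⁻¹) * S =
      S * diagonal k * S - ε • (1 : Matrix (Fin n) (Fin n) ℝ) := by
    rw [mul_sub, sub_mul, Matrix.mul_smul, Matrix.smul_mul, hSinv]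
  have conj2 : S * ((2 - ε) • X⁻¹ - diagonal k) * S =
      (2 - ε) • (1 : Matrix (Fin n) (Fin n) ℝ) - S * diagonal k * S := by
    rw [mul_sub, sub_mul, Matrix.mul_smul, Matrix.smul_mul, hSinv]
  constructor
  · have h1 := PSD1.mul_mul_conjTranspose_same S
    rw [hS.1] at h1
    rw [conj1] at h1
    have : (1 - ε) • (1 : Matrix (Fin n) (Fin n) ℝ) - (1 - S * diagonal k * S)
        = S * diagonal k * S - ε • (1 : Matrix (Fin n) (Fin n) ℝ) := by
      rw [sub_smul, one_smul]; abel
    rw [this]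
    exact h1
  · have h2 := PSD2.mul_mul_conjTranspose_same S
    rw [hS.1] at h2
    rw [conj2] at h2
    have : (1 - S * diagonal k * S) - (-(1 - ε)) • (1 : Matrix (Fin n) (Fin n) ℝ)
        = (2 - ε) • (1 : Matrix (Fin n) (Fin n) ℝ) - S * diagonal k * S := by
      rw [neg_smul, sub_smul, sub_smul, one_smul]
      have h2one : (2 : ℝ) • (1 : Matrix (Fin n) (Fin n) ℝ) = 1 + 1 := by
        rw [two_smul]
      rw [h2one]; abel
    rw [this]
    exact h2
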